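/- Let q be a Boolean self-join-free conjunctive query over a tuple-independent probabilistic database D that satisfies a set Γ of functional dependencies, where Γ is the union of functional dependencies each holding on the attributes of a single relation of D. For an atom R_i(x̄_i), let x̄_i⁺ denote the closure of x̄_i under Γ. Then dissociating the relation R_i on any variable y ∈ x̄_i⁺ ∖ x̄_i does not change the probability: if Δ' is obtained from a dissociation Δ by additionally adding such a variable y to ȳ_i, then P(q^{Δ'}) = P(q^Δ). -/

import Mathlib

open scoped Classical

namespace PDB

noncomputable section

/-! ### Monotone DNF formulas over a finite variable set -/

/-- Probability that a monotone DNF formula (given by its finite set of implicants, each a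
finite set of positive variables) is true, when each variable `x` is independently true with
probability `p x`. -/
def dnfProb {X : Type*} [Fintype X] (p : X → ℝ) (F : Finset (Finset X)) : ℝ :=
  ∑ ω : X → Bool,
    (∏ x : X, if ω x = true then p x else 1 - p x) *
      (if ∃ T ∈ F, ∀ x ∈ T, ω x = true then 1 else 0)

/-- A prime implicant of a monotone DNF formula: a minimal implicant. -/
def IsPrimeImplicant {X : Type*} (F : Finset (Finset X)) (T : Finset X) : Prop :=
  T ∈ F ∧ ∀ S ∈ F, S ⊆ T → S = T

variable {A V dom : Type*}

/-! ### Self-join-free conjunctive queries: hierarchy and connectivity.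
A self-join-free conjunctive query is given by its atoms: a family `atoms : A → Finset V`
assigning to each of the (pairwise distinct) relation symbols its finite set of variables;
`H` denotes the set of head variables (treated as constants); all other variables are
existential.  A Boolean query has `H = ∅`. -/

/-- `at(x)`: the atoms among `S` that contain the variable `x`. -/
def atOf (atoms : A → Finset V) (S : Finset A) (x : V) : Finset A :=
  S.filter (fun i => x ∈ atoms i)

/-- The query consisting of the atoms `S` is hierarchical, with the variables in `H`
treated as constants (head variables): for any two existential variables, their atom sets
are comparable or disjoint. -/
def HierOn (atoms : A → Finset V) (S : Finset A) (H : Finset V) : Prop :=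
  ∀ x : V, x ∉ H → ∀ y : V, y ∉ H →
    atOf atoms S x ⊆ atOf atoms S y ∨ atOf atoms S x ∩ atOf atoms S y = ∅ ∨
      atOf atoms S y ⊆ atOf atoms S x

/-- A Boolean query (with all its atoms) is hierarchical. -/
def Hier [Fintype A] (atoms : A → Finset V) : Prop :=
  HierOn atoms Finset.univ ∅

/-- The set of atoms `S` is disconnected: it can be partitioned into two nonempty sets
sharing no variables. -/
def Disconn (atoms : A → Finset V) (S : Finset A) : Prop :=
  ∃ T : Finset A, T ⊆ S ∧ T.Nonempty ∧ (S \ T).Nonempty ∧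
    ∀ i ∈ T, ∀ j ∈ S \ T, atoms i ∩ atoms j = ∅

/-- `T` is a connected component of the set of atoms `S`: a maximal connected subset. -/
def IsComp (atoms : A → Finset V) (S T : Finset A) : Prop :=
  T ⊆ S ∧ T.Nonempty ∧ ¬ Disconn atoms T ∧
    ∀ U : Finset A, T ⊆ U → U ⊆ S → ¬ Disconn atoms U → U = T

/-- `xs` is a cut-set of the query with atoms `S`: a set of its variables whose removal
disconnects the query. -/
def IsCutSet (atoms : A → Finset V) (S : Finset A) (xs : Finset V) : Prop :=
  xs ⊆ S.sup atoms ∧ Disconn (fun i => atoms i \ xs) S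

/-- a minimal cut-set (min-cut-set) -/
def MinCut (atoms : A → Finset V) (S : Finset A) (xs : Finset V) : Prop :=
  IsCutSet atoms S xs ∧ ∀ ys : Finset V, ys ⊂ xs → ¬ IsCutSet atoms S ys

/-- the separator variables of a Boolean query: the variables occurring in every atom -/
def SepVars [Fintype A] [Fintype V] (atoms : A → Finset V) : Finset V :=
  Finset.univ.filter (fun x => ∀ i : A, x ∈ atoms i)

/-- the set of variables of a query -/
def varsOf [Fintype A] (atoms : A → Finset V) : Finset V :=
  Finset.univ.sup atoms

/-! ### Dissociations -/

/-- `Δ` is a dissociation of the query with atoms `atoms` and head variables `H`: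
each atom receives extra existential variables of the query that it does not already
contain. -/
def IsDiss [Fintype A] (atoms : A → Finset V) (H : Finset V) (Δ : A → Finset V) : Prop :=
  ∀ i : A, Δ i ⊆ (varsOf atoms \ H) \ atoms i

/-- the atoms of the dissociated query `q^Δ` -/
def dissAtoms (atoms Δ : A → Finset V) : A → Finset V := fun i => atoms i ∪ Δ i

/-- the partial dissociation order `Δ ≼ Δ'` -/
def dissLE (Δ Δ' : A → Finset V) : Prop := ∀ i : A, Δ i ⊆ Δ' i

/-- a safe dissociation: the dissociated query is hierarchical -/
def SafeDiss [Fintype A] (atoms : A → Finset V) (H : Finset V) (Δ : A → Finset V) : Prop :=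
  IsDiss atoms H Δ ∧ HierOn (dissAtoms atoms Δ) Finset.univ H

/-- a minimal safe dissociation: no smaller dissociation (in the order `≼`) is safe -/
def MinSafeDiss [Fintype A] (atoms : A → Finset V) (H : Finset V) (Δ : A → Finset V) : Prop :=
  SafeDiss atoms H Δ ∧
    ∀ Δ' : A → Finset V, SafeDiss atoms H Δ' → dissLE Δ' Δ → Δ' = Δ

/-! ### Tuple-independent probabilistic databases -/

/-- A tuple-independent probabilistic database for the query with atoms `atoms` over the
finite domain `dom`: each relation `i` is a finite set of tuples (functions from the
variables of the atom to the domain), each carrying a probability. -/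
structure DB (atoms : A → Finset V) (dom : Type*) where
  tuples : ∀ i : A, Finset ({x // x ∈ atoms i} → dom)
  prob : ∀ i : A, ({x // x ∈ atoms i} → dom) → ℝ

/-- all tuple probabilities lie in [0,1] -/
def DB.Valid {atoms : A → Finset V} (D : DB atoms dom) : Prop :=
  ∀ i : A, ∀ t ∈ D.tuples i, 0 ≤ D.prob i t ∧ D.prob i t ≤ 1

/-- the restriction of a valuation of all variables to the tuple format of atom `i` -/
def restrict (atoms : A → Finset V) (i : A) (ν : V → dom) : {x // x ∈ atoms i} → dom :=
  fun x => ν x.1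

/-- restriction of a tuple to a smaller variable set -/
def restrictTup {xs ys : Finset V} (h : xs ⊆ ys) (t : {x // x ∈ ys} → dom) :
    {x // x ∈ xs} → dom :=
  fun x => t ⟨x.1, h x.2⟩

/-- `P(q)`: the probability that the Boolean query with atoms `atoms` is true in a possible
world chosen by independently including each tuple `t` of `D` with probability `p(t)`. -/
def queryProb [Fintype A] (atoms : A → Finset V) (D : DB atoms dom) : ℝ :=
  ∑ W : ∀ i : A, {t // t ∈ D.tuples i} → Bool,
    (∏ i : A, ∏ t : {t // t ∈ D.tuples i},
        if W i t = true then D.prob i t.1 else 1 - D.prob i t.1) *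
      (if ∃ ν : V → dom, ∀ i : A,
            ∃ h : restrict atoms i ν ∈ D.tuples i, W i ⟨restrict atoms i ν, h⟩ = true
        then 1 else 0)

/-- The dissociated database `D^Δ`: relation `R_i^{ȳ_i}` contains one copy of each tuple
`t ∈ R_i` for every assignment of the added variables `ȳ_i` to domain values, with the same
probability as `t`. -/
def dissDB [Fintype dom] (atoms Δ : A → Finset V) (D : DB atoms dom) :
    DB (dissAtoms atoms Δ) dom where
  tuples i := Finset.univ.filter
    (fun t : {x // x ∈ dissAtoms atoms Δ i} → dom =>
      restrictTup (show atoms i ⊆ dissAtoms atoms Δ i from Finset.subset_union_left) t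
        ∈ D.tuples i)
  prob i t :=
    D.prob i
      (restrictTup (show atoms i ⊆ dissAtoms atoms Δ i from Finset.subset_union_left) t)

/-- `P(q^Δ)`: the probability of the dissociated query on the dissociated database. -/
def dissProb [Fintype A] [Fintype dom] (atoms Δ : A → Finset V) (D : DB atoms dom) : ℝ :=
  queryProb (dissAtoms atoms Δ) (dissDB atoms Δ D)

/-- The propagation score `ρ(q)`: the minimum of `P(q^Δ)` over all safe dissociations. -/
def propScore [Fintype A] [Fintype dom] (atoms : A → Finset V)
    (D : DB atoms dom) : ℝ :=
  sInf { r : ℝ | ∃ Δ : A → Finset V, SafeDiss atoms ∅ Δ ∧ r = dissProb atoms Δ D }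

/-- the database with all tuple probabilities scaled by the factor `f` -/
def scaleDB {atoms : A → Finset V} (D : DB atoms dom) (f : ℝ) : DB atoms dom where
  tuples := D.tuples
  prob i t := f * D.prob i t

/-- relation `i` is deterministic: all its tuples have probability 1 (otherwise it is
probabilistic) -/
def Deterministic {atoms : A → Finset V} (D : DB atoms dom) (i : A) : Prop :=
  ∀ t ∈ D.tuples i, D.prob i t = 1

/-- The lineage `F_{q,D}` of the Boolean query on `D`: the monotone DNF over the tuples of
`D` whose implicants correspond to the satisfying assignments of the query. -/
def lineage [Fintype A] [Fintype V] [Fintype dom] (atoms : A → Finset V)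
    (D : DB atoms dom) :
    Finset (Finset (Σ i : A, {x // x ∈ atoms i} → dom)) :=
  ((Finset.univ : Finset (V → dom)).filter
      (fun ν => ∀ i : A, restrict atoms i ν ∈ D.tuples i)).image
    (fun ν => Finset.univ.image
      (fun i : A => (⟨i, restrict atoms i ν⟩ : Σ i : A, {x // x ∈ atoms i} → dom)))

/-- The substitution `θ : D^Δ → D` mapping every tuple of a dissociated relation
`R_i^{ȳ_i}` to its projection onto the original variables of `R_i`. -/
def dissTupleMap (atoms Δ : A → Finset V) :
    (Σ i : A, {x // x ∈ dissAtoms atoms Δ i} → dom) →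
      Σ i : A, {x // x ∈ atoms i} → dom :=
  fun t =>
    ⟨t.1, restrictTup (show atoms t.1 ⊆ dissAtoms atoms Δ t.1 from Finset.subset_union_left)
      t.2⟩

/-! ### Functional dependencies -/

/-- `Determines Γ xs y`: the variable `y` is in the closure `xs⁺` of `xs` under the
functional dependencies `Γ`. -/
inductive Determines (Γ : Set (Finset V × V)) : Finset V → V → Prop
  | mem (xs : Finset V) (y : V) (h : y ∈ xs) : Determines Γ xs y
  | step (xs : Finset V) (fd : Finset V × V) (hfd : fd ∈ Γ)
      (hall : ∀ z ∈ fd.1, Determines Γ xs z) : Determines Γ xs fd.2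

/-- The functional dependency `fd` is an FD on the attributes of relation `j` that holds
in the database `D`. -/
def FDHolds (atoms : A → Finset V) (D : DB atoms dom) (j : A) (fd : Finset V × V) : Prop :=
  ∃ h1 : fd.1 ⊆ atoms j, ∃ h2 : fd.2 ∈ atoms j,
    ∀ t ∈ D.tuples j, ∀ t' ∈ D.tuples j,
      (∀ v : V, ∀ hv : v ∈ fd.1, t ⟨v, h1 hv⟩ = t' ⟨v, h1 hv⟩) →
        t ⟨fd.2, h2⟩ = t' ⟨fd.2, h2⟩

/-! ### Query plans -/

/-- Query plans: atoms, duplicate-eliminating projections (given by the retained head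
variables), and k-ary natural joins. -/
inductive Plan (A V : Type*) where
  | atom : A → Plan A V
  | proj : Finset V → Plan A V → Plan A V
  | join : List (Plan A V) → Plan A V

namespace Plan

/-- the head variables of a plan -/
def hvar (atoms : A → Finset V) : Plan A V → Finset V
  | .atom i => atoms i
  | .proj hv _ => hv
  | .join Ps => Ps.attach.foldr (fun P acc => hvar atoms P.1 ∪ acc) ∅
decreasing_by
  all_goals simp_wf
  all_goals try have := List.sizeOf_lt_of_mem P.2
  all_goals omega

/-- the multiset of atoms used by a plan -/
def atomsOf : Plan A V → Multiset A
  | .atom i => {i}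
  | .proj _ P => atomsOf P
  | .join Ps => Ps.attach.foldr (fun P acc => atomsOf P.1 + acc) 0
decreasing_by
  all_goals simp_wf
  all_goals try have := List.sizeOf_lt_of_mem P.2
  all_goals omega

def isProj : Plan A V → Prop
  | .proj _ _ => True
  | _ => False

def isJoin : Plan A V → Prop
  | .join _ => True
  | _ => False

/-- structural well-formedness: projections only retain available variables, joins are at
least binary, and joins and projections alternate -/
def WF (atoms : A → Finset V) : Plan A V → Prop
  | .atom _ => True
  | .proj hv P => hv ⊆ hvar atoms P ∧ ¬ isProj P ∧ WF atoms P
  | .join Ps => 2 ≤ Ps.length ∧ ∀ P ∈ Ps, ¬ isJoin P ∧ WF atoms P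
decreasing_by
  all_goals simp_wf
  all_goals try rename_i h; try have := List.sizeOf_lt_of_mem h
  all_goals omega

/-- a safe plan: at every join, all subplans have the same head variables -/
def Safe (atoms : A → Finset V) : Plan A V → Prop
  | .atom _ => True
  | .proj _ P => Safe atoms P
  | .join Ps => (∀ P ∈ Ps, Safe atoms P) ∧
      ∀ P ∈ Ps, ∀ Q ∈ Ps, hvar atoms P = hvar atoms Q
decreasing_by
  all_goals simp_wf
  all_goals try rename_i h; try have := List.sizeOf_lt_of_mem h
  all_goals omega

/-- `P` is a (well-formed) query plan for the query with atoms `atoms` and head variables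
`H`: it uses every atom exactly once and its output head variables are exactly `H`
(for a Boolean query, `H = ∅`, i.e. all existential variables are projected away). -/
def IsPlanFor [Fintype A] (atoms : A → Finset V) (H : Finset V) (P : Plan A V) : Prop :=
  WF atoms P ∧ atomsOf P = (Finset.univ : Finset A).val ∧ hvar atoms P = H

/-- the join variables: the union of the head variables of a list of subplans -/
def joinVars (atoms : A → Finset V) (Ps : List (Plan A V)) : Finset V :=
  (Ps.map (hvar atoms)).foldr (· ∪ ·) ∅

/-- Identification of plans up to join order, flattening of nested joins, and removal of
trivial (identity) projections. -/
inductive Equiv (atoms : A → Finset V) : Plan A V → Plan A V → Prop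
  | refl (P) : Equiv atoms P P
  | symm {P Q} : Equiv atoms P Q → Equiv atoms Q P
  | trans {P Q R} : Equiv atoms P Q → Equiv atoms Q R → Equiv atoms P R
  | projCongr (hv) {P Q} : Equiv atoms P Q → Equiv atoms (.proj hv P) (.proj hv Q)
  | joinCongr {Ps Qs} : List.Forall₂ (Equiv atoms) Ps Qs →
      Equiv atoms (.join Ps) (.join Qs)
  | joinPerm {Ps Qs} : Ps.Perm Qs → Equiv atoms (.join Ps) (.join Qs)
  | joinFlatten (Ps Qs Rs) :
      Equiv atoms (.join (Ps ++ .join Qs :: Rs)) (.join (Ps ++ Qs ++ Rs))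
  | projTriv {P} (hv) (h : hv = hvar atoms P) : Equiv atoms (.proj hv P) P

/-- The extensional score semantics of a plan evaluated on the database `D`: output tuples
are represented by total valuations `ν : V → dom` (only the values on the head variables
matter; duplicates are represented canonically by the default value `d₀` outside the head
variables).  Joins multiply scores, and duplicate-eliminating projections combine the
scores `s_1, …, s_n` of the tuples projecting to a common output tuple to
`1 - ∏ (1 - s_i)`. -/
def score [Fintype V] [Fintype dom] (atoms : A → Finset V) (D : DB atoms dom) (d₀ : dom) :
    Plan A V → (V → dom) → ℝ
  | .atom i, ν =>
      if restrict atoms i ν ∈ D.tuples i then D.prob i (restrict atoms i ν) else 0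
  | .proj hv P, ν =>
      1 - ∏ μ ∈ Finset.univ.filter (fun μ : V → dom =>
            (∀ v : V, v ∉ hvar atoms P → μ v = d₀) ∧ ∀ v ∈ hv, μ v = ν v),
          (1 - score atoms D d₀ P μ)
  | .join Ps, ν => (Ps.attach.map (fun P => score atoms D d₀ P.1 ν)).prod
decreasing_by
  all_goals simp_wf
  all_goals try have := List.sizeOf_lt_of_mem P.2
  all_goals omega

/-- the score of a Boolean plan -/
def bscore [Fintype V] [Fintype dom] [Inhabited dom] (atoms : A → Finset V)
    (D : DB atoms dom) (P : Plan A V) : ℝ :=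
  score atoms D default P (fun _ => default)

/-- Dropping the dissociated variables from a plan (for a dissociated query) to obtain the
corresponding plan `P^Δ` for the original query: every projection list is restricted to
the variables actually available in the original query. -/
def eraseTo (atoms : A → Finset V) : Plan A V → Plan A V
  | .atom i => .atom i
  | .proj hv P => .proj (hv ∩ hvar atoms (eraseTo atoms P)) (eraseTo atoms P)
  | .join Ps => .join (Ps.attach.map (fun P => eraseTo atoms P.1))
decreasing_by
  all_goals simp_wf
  all_goals try have := List.sizeOf_lt_of_mem P.2
  all_goals omega

/-- The dissociation `Δ^P` corresponding to a plan `P`: for each join operator with join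
variables `JVar = ⋃_j HVar(P_j)`, every relation occurring in subplan `P_j` receives the
variables `JVar ∖ HVar(P_j)`. -/
def dissOf (atoms : A → Finset V) : Plan A V → A → Finset V
  | .atom _ => fun _ => ∅
  | .proj _ P => dissOf atoms P
  | .join Ps => fun i =>
      Ps.attach.foldr (fun P acc =>
        (if i ∈ atomsOf P.1 then
            (joinVars atoms Ps \ hvar atoms P.1) ∪ dissOf atoms P.1 i
          else ∅) ∪ acc) ∅
decreasing_by
  all_goals simp_wf
  all_goals try have := List.sizeOf_lt_of_mem P.2
  all_goals omega

end Plan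

/-- The recursive algorithm `MP` enumerating the minimal query plans of the query with
atom set `S` and head variables `H` (head variables are treated as constants):
* if the query has a single atom, return the projection of that atom onto the head
  variables;
* if the query (after removing the head variables) is disconnected, return any join of
  minimal plans of its connected components (each component keeping the head variables
  occurring in it);
* otherwise, for any minimal cut-set `ys` of the query minus its head variables, return
  the plan projecting `ys` away from any minimal plan of the query with head variables
  `H ∪ ys`. -/
inductive MPrel (atoms : A → Finset V) : Finset A → Finset V → Plan A V → Prop
  | single (i : A) (H : Finset V) : MPrel atoms {i} H (.proj H (.atom i))
  | disc (S : Finset A) (H : Finset V) (parts : List (Finset A)) (Ps : List (Plan A V))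
      (hdup : parts.Nodup) (hlen : 2 ≤ parts.length)
      (hparts : ∀ T : Finset A, T ∈ parts ↔ IsComp (fun i => atoms i \ H) S T)
      (hlen2 : parts.length = Ps.length)
      (hPs : ∀ n : ℕ, ∀ h1 : n < parts.length, ∀ h2 : n < Ps.length,
        MPrel atoms parts[n] (H ∩ (parts[n]).sup atoms) Ps[n]) :
      MPrel atoms S H (.join Ps)
  | conn (S : Finset A) (H : Finset V) (ys : Finset V) (P : Plan A V)
      (hcard : 2 ≤ S.card)
      (hconn : ¬ Disconn (fun i => atoms i \ H) S)
      (hcut : MinCut (fun i => atoms i \ H) S ys)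
      (hP : MPrel atoms S (H ∪ ys) P) :
      MPrel atoms S H (.proj H P)


section Aux
variable {A V dom : Type*}

/-- all possible worlds condition -/
def Sat' (atoms : A → Finset V) (D : DB atoms dom) (ν : V → dom) : Prop :=
  ∀ k, restrict atoms k ν ∈ D.tuples k

/-- relevant tuples: those arising from some satisfying valuation -/
def Rel' (atoms : A → Finset V) (D : DB atoms dom)
    (s : Σ j : A, {t // t ∈ D.tuples j}) : Prop :=
  ∃ ν : V → dom, Sat' atoms D ν ∧ restrict atoms s.1 ν = s.2.1

lemma queryProb_sigma [Fintype A] (atoms : A → Finset V) (D : DB atoms dom) :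
    queryProb atoms D
      = ∑ f : (Σ j : A, {t // t ∈ D.tuples j}) → Bool,
          (∏ s : Σ j : A, {t // t ∈ D.tuples j},
            if f s = true then D.prob s.1 s.2.1 else 1 - D.prob s.1 s.2.1) *
          (if ∃ ν : V → dom, ∀ j : A,
              ∃ h : restrict atoms j ν ∈ D.tuples j, f ⟨j, restrict atoms j ν, h⟩ = true
            then 1 else 0) := by
  classical
  unfold queryProb
  rw [← Equiv.sum_comp (Equiv.piCurry fun (j : A) (_ : {t // t ∈ D.tuples j}) => Bool)]
  refine Finset.sum_congr rfl fun f _ => ?_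
  congr 1
  rw [← Finset.univ_sigma_univ, Finset.prod_sigma]
  rfl

lemma sum_restrict {α : Type*} [Fintype α] [DecidableEq α] (w : α → Bool → ℝ)
    (hw : ∀ a, w a true + w a false = 1)
    (I : (α → Bool) → ℝ) (R : α → Prop)
    (hI : ∀ f f' : α → Bool, (∀ a, R a → f a = f' a) → I f = I f') :
    ∑ f : α → Bool, (∏ a, w a (f a)) * I f
      = ∑ g : {a // R a} → Bool,
          (∏ b : {a // R a}, w b.1 (g b)) *
            I (fun a => if h : R a then g ⟨a, h⟩ else false) := by
  classical
  calc ∑ f : α → Bool, (∏ a, w a (f a)) * I f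
      = ∑ p : ({a // R a} → Bool) × ({a // ¬ R a} → Bool),
          (∏ a, w a ((Equiv.piEquivPiSubtypeProd R fun _ => Bool).symm p a)) *
            I ((Equiv.piEquivPiSubtypeProd R fun _ => Bool).symm p) :=
        (Equiv.sum_comp (Equiv.piEquivPiSubtypeProd R fun _ => Bool).symm _).symm
    _ = ∑ g : {a // R a} → Bool, ∑ h : {a // ¬ R a} → Bool,
          (∏ a, w a ((Equiv.piEquivPiSubtypeProd R fun _ => Bool).symm (g, h) a)) *
            I ((Equiv.piEquivPiSubtypeProd R fun _ => Bool).symm (g, h)) := by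
        rw [Fintype.sum_prod_type]
    _ = ∑ g : {a // R a} → Bool,
          (∏ b : {a // R a}, w b.1 (g b)) *
            I (fun a => if h : R a then g ⟨a, h⟩ else false) := by
        refine Finset.sum_congr rfl fun g _ => ?_
        have hsymm : ∀ (h : {a // ¬ R a} → Bool) (a : α),
            (Equiv.piEquivPiSubtypeProd R fun _ => Bool).symm (g, h) a
              = if ha : R a then g ⟨a, ha⟩ else h ⟨a, ha⟩ := fun h a => rfl
        have hIeq : ∀ h : {a // ¬ R a} → Bool,
            I ((Equiv.piEquivPiSubtypeProd R fun _ => Bool).symm (g, h))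
              = I (fun a => if ha : R a then g ⟨a, ha⟩ else false) := by
          intro h
          refine hI _ _ fun a ha => ?_
          rw [hsymm]; simp [ha]
        have hW : ∀ h : {a // ¬ R a} → Bool,
            (∏ a, w a ((Equiv.piEquivPiSubtypeProd R fun _ => Bool).symm (g, h) a))
              = (∏ b : {a // R a}, w b.1 (g b)) * (∏ b : {a // ¬ R a}, w b.1 (h b)) := by
          intro h
          rw [← Fintype.prod_subtype_mul_prod_subtype R
            (fun a => w a ((Equiv.piEquivPiSubtypeProd R fun _ => Bool).symm (g, h) a))]
          congr 1
          · refine Finset.prod_congr rfl fun b _ => ?_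
            rw [hsymm]; simp [b.2]
          · refine Finset.prod_congr rfl fun b _ => ?_
            rw [hsymm]; simp [b.2]
        calc ∑ h : {a // ¬ R a} → Bool,
              (∏ a, w a ((Equiv.piEquivPiSubtypeProd R fun _ => Bool).symm (g, h) a)) *
                I ((Equiv.piEquivPiSubtypeProd R fun _ => Bool).symm (g, h))
            = ∑ h : {a // ¬ R a} → Bool,
                ((∏ b : {a // R a}, w b.1 (g b)) *
                  I (fun a => if ha : R a then g ⟨a, ha⟩ else false)) *
                  (∏ b : {a // ¬ R a}, w b.1 (h b)) := by
              refine Finset.sum_congr rfl fun h _ => ?_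
              rw [hIeq, hW]; ring
          _ = (∏ b : {a // R a}, w b.1 (g b)) *
                I (fun a => if ha : R a then g ⟨a, ha⟩ else false) := by
              rw [← Finset.mul_sum]
              have h1 : ∑ h : {a // ¬ R a} → Bool, ∏ b : {a // ¬ R a}, w b.1 (h b) = 1 := by
                have := Finset.prod_univ_sum (fun _ : {a // ¬ R a} => (Finset.univ : Finset Bool))
                  (fun b c => w b.1 c)
                rw [Fintype.piFinset_univ] at this
                rw [← this, Finset.prod_eq_one]
                intro b _
                rw [Fintype.sum_bool]
                exact hw b.1
              rw [h1, mul_one]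

lemma queryProb_rel [Fintype A] (atoms : A → Finset V) (D : DB atoms dom) :
    queryProb atoms D
      = ∑ g : {s : Σ j : A, {t // t ∈ D.tuples j} // Rel' atoms D s} → Bool,
          (∏ b : {s : Σ j : A, {t // t ∈ D.tuples j} // Rel' atoms D s},
            if g b = true then D.prob b.1.1 b.1.2.1 else 1 - D.prob b.1.1 b.1.2.1) *
          (if ∃ ν : V → dom, ∃ hS : Sat' atoms D ν, ∀ j : A,
              g ⟨⟨j, restrict atoms j ν, hS j⟩, ⟨ν, hS, rfl⟩⟩ = true
            then 1 else 0) := by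
  classical
  have hw : ∀ s : Σ j : A, {t // t ∈ D.tuples j},
      (fun (s : Σ j : A, {t // t ∈ D.tuples j}) (b : Bool) =>
        if b = true then D.prob s.1 s.2.1 else 1 - D.prob s.1 s.2.1) s true +
      (fun (s : Σ j : A, {t // t ∈ D.tuples j}) (b : Bool) =>
        if b = true then D.prob s.1 s.2.1 else 1 - D.prob s.1 s.2.1) s false = 1 := by
    intro s; simp
  have hmono : ∀ f f' : ((Σ j : A, {t // t ∈ D.tuples j}) → Bool),
      (∀ s, Rel' atoms D s → f s = f' s) →
      (∃ ν : V → dom, ∀ j : A,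
        ∃ h : restrict atoms j ν ∈ D.tuples j, f ⟨j, restrict atoms j ν, h⟩ = true) →
      (∃ ν : V → dom, ∀ j : A,
        ∃ h : restrict atoms j ν ∈ D.tuples j, f' ⟨j, restrict atoms j ν, h⟩ = true) := by
    intro f f' hag ⟨ν, hj⟩
    have hS : Sat' atoms D ν := fun k => (hj k).choose
    refine ⟨ν, fun j => ⟨hS j, ?_⟩⟩
    rw [← hag _ ⟨ν, hS, rfl⟩]
    exact (hj j).choose_spec
  have hI : ∀ f f' : ((Σ j : A, {t // t ∈ D.tuples j}) → Bool),
      (∀ s, Rel' atoms D s → f s = f' s) →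
      (fun f : (Σ j : A, {t // t ∈ D.tuples j}) → Bool =>
        (if ∃ ν : V → dom, ∀ j : A,
            ∃ h : restrict atoms j ν ∈ D.tuples j, f ⟨j, restrict atoms j ν, h⟩ = true
          then (1:ℝ) else 0)) f
      = (fun f : (Σ j : A, {t // t ∈ D.tuples j}) → Bool =>
        (if ∃ ν : V → dom, ∀ j : A,
            ∃ h : restrict atoms j ν ∈ D.tuples j, f ⟨j, restrict atoms j ν, h⟩ = true
          then (1:ℝ) else 0)) f' := by
    intro f f' hag
    simp only []
    have : (∃ ν : V → dom, ∀ j : A,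
        ∃ h : restrict atoms j ν ∈ D.tuples j, f ⟨j, restrict atoms j ν, h⟩ = true) ↔
        (∃ ν : V → dom, ∀ j : A,
        ∃ h : restrict atoms j ν ∈ D.tuples j, f' ⟨j, restrict atoms j ν, h⟩ = true) :=
      ⟨hmono f f' hag, hmono f' f fun s hs => (hag s hs).symm⟩
    exact if_congr this rfl rfl
  refine (queryProb_sigma atoms D).trans
    ((sum_restrict
      (fun (s : Σ j : A, {t // t ∈ D.tuples j}) (b : Bool) =>
        if b = true then D.prob s.1 s.2.1 else 1 - D.prob s.1 s.2.1) hw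
      (fun f : (Σ j : A, {t // t ∈ D.tuples j}) → Bool =>
        (if ∃ ν : V → dom, ∀ j : A,
            ∃ h : restrict atoms j ν ∈ D.tuples j, f ⟨j, restrict atoms j ν, h⟩ = true
          then (1:ℝ) else 0))
      (Rel' atoms D) hI).trans ?_)
  refine Finset.sum_congr rfl fun g _ => ?_
  congr 1
  have hcond : (∃ ν : V → dom, ∀ j : A,
      ∃ h : restrict atoms j ν ∈ D.tuples j,
        (fun s => if hs : Rel' atoms D s then g ⟨s, hs⟩ else false)
          (⟨j, restrict atoms j ν, h⟩ : Σ j : A, {t // t ∈ D.tuples j}) = true) ↔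
      (∃ ν : V → dom, ∃ hS : Sat' atoms D ν, ∀ j : A,
        g ⟨⟨j, restrict atoms j ν, hS j⟩, ⟨ν, hS, rfl⟩⟩ = true) := by
    constructor
    · rintro ⟨ν, hj⟩
      have hS : Sat' atoms D ν := fun k => (hj k).choose
      refine ⟨ν, hS, fun j => ?_⟩
      have hg := (hj j).choose_spec
      exact (dif_pos (⟨ν, hS, rfl⟩ :
        Rel' atoms D ⟨j, restrict atoms j ν, (hj j).choose⟩)).symm.trans hg
    · rintro ⟨ν, hS, hj⟩
      refine ⟨ν, fun j => ⟨hS j, ?_⟩⟩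
      exact (dif_pos (⟨ν, hS, rfl⟩ :
        Rel' atoms D ⟨j, restrict atoms j ν, hS j⟩)).trans (hj j)
  exact if_congr hcond rfl rfl
end Aux

section FD
variable {A V dom : Type*}

lemma determines_val_eq (atoms : A → Finset V) (D : DB atoms dom)
    (Γ : Set (Finset V × V)) (hΓ : ∀ fd ∈ Γ, ∃ j : A, FDHolds atoms D j fd)
    (ν ν' : V → dom) (hν : ∀ k, restrict atoms k ν ∈ D.tuples k)
    (hν' : ∀ k, restrict atoms k ν' ∈ D.tuples k) :
    ∀ (xs : Finset V) (y : V), Determines Γ xs y →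
      (∀ v ∈ xs, ν v = ν' v) → ν y = ν' y := by
  intro xs y hy
  induction hy with
  | mem y h => intro hag; exact hag y h
  | step fd hfd hall ih =>
    intro hag
    obtain ⟨j, h1, h2, hfdh⟩ := hΓ fd hfd
    exact hfdh (restrict atoms j ν) (hν j) (restrict atoms j ν') (hν' j)
      (fun v hv => ih v hv hag)
end FD

section Shrink
variable {A V dom : Type*}

lemma mem_dissDB_tuples [Fintype dom] (atoms Δ : A → Finset V) (D : DB atoms dom) (j : A)
    (t : {x // x ∈ dissAtoms atoms Δ j} → dom) :
    t ∈ (dissDB atoms Δ D).tuples j ↔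
      restrictTup Finset.subset_union_left t ∈ D.tuples j := by
  simp [dissDB]
  exact Iff.rfl

lemma sat'_dissDB [Fintype dom] (atoms Δ : A → Finset V) (D : DB atoms dom) (ν : V → dom) :
    Sat' (dissAtoms atoms Δ) (dissDB atoms Δ D) ν ↔
      ∀ k, restrict atoms k ν ∈ D.tuples k := by
  unfold Sat'
  refine forall_congr' fun k => ?_
  rw [mem_dissDB_tuples]
  exact Iff.rfl

/-- projection of relevant tuples of the larger dissociation to the smaller one -/
def dissShrink [Fintype dom] (atoms Δ Δ' : A → Finset V) (D : DB atoms dom)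
    (hsub : ∀ j, dissAtoms atoms Δ j ⊆ dissAtoms atoms Δ' j)
    (s : {s : Σ j : A, {t // t ∈ (dissDB atoms Δ' D).tuples j} //
          Rel' (dissAtoms atoms Δ') (dissDB atoms Δ' D) s}) :
    {s : Σ j : A, {t // t ∈ (dissDB atoms Δ D).tuples j} //
          Rel' (dissAtoms atoms Δ) (dissDB atoms Δ D) s} :=
  ⟨⟨s.1.1, ⟨restrictTup (hsub s.1.1) s.1.2.1,
      (mem_dissDB_tuples atoms Δ D s.1.1 _).mpr
        ((mem_dissDB_tuples atoms Δ' D s.1.1 s.1.2.1).mp s.1.2.2)⟩⟩,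
    by
      obtain ⟨ν, hS, hres⟩ := s.2
      refine ⟨ν, (sat'_dissDB atoms Δ D ν).mpr ((sat'_dissDB atoms Δ' D ν).mp hS), ?_⟩
      exact congrArg (restrictTup (hsub s.1.1)) hres⟩

lemma dissShrink_bijective [Fintype dom] (atoms Δ Δ' : A → Finset V) (D : DB atoms dom)
    (hsub : ∀ j, dissAtoms atoms Δ j ⊆ dissAtoms atoms Δ' j)
    (huniq : ∀ (j : A) (ν ν' : V → dom),
      (∀ k, restrict atoms k ν ∈ D.tuples k) → (∀ k, restrict atoms k ν' ∈ D.tuples k) →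
      (∀ v ∈ dissAtoms atoms Δ j, ν v = ν' v) →
      ∀ v ∈ dissAtoms atoms Δ' j, ν v = ν' v) :
    Function.Bijective (dissShrink atoms Δ Δ' D hsub) := by
  constructor
  · rintro ⟨⟨j, t, ht⟩, hr⟩ ⟨⟨j', t', ht'⟩, hr'⟩ heq
    rw [Subtype.ext_iff] at heq
    obtain ⟨h1, h2⟩ := Sigma.mk.inj_iff.mp heq
    subst h1
    have hres : restrictTup (hsub j) t = restrictTup (hsub j) t' :=
      Subtype.ext_iff.mp (eq_of_heq h2)
    obtain ⟨ν, hS, hres1⟩ := hr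
    obtain ⟨ν', hS', hres2⟩ := hr'
    have hres1' : restrict (dissAtoms atoms Δ') j ν = t := hres1
    have hres2' : restrict (dissAtoms atoms Δ') j ν' = t' := hres2
    have hSν : ∀ k, restrict atoms k ν ∈ D.tuples k :=
      (sat'_dissDB atoms Δ' D ν).mp hS
    have hSν' : ∀ k, restrict atoms k ν' ∈ D.tuples k :=
      (sat'_dissDB atoms Δ' D ν').mp hS'
    have hag : ∀ v ∈ dissAtoms atoms Δ j, ν v = ν' v := by
      intro v hv
      have h3 := congrFun hres ⟨v, hv⟩
      rw [← hres1', ← hres2'] at h3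
      exact h3
    have hval : t = t' := by
      rw [← hres1', ← hres2']
      funext x
      exact huniq j ν ν' hSν hSν' hag x.1 x.2
    subst hval
    rfl
  · rintro ⟨⟨j, v, hv⟩, hr⟩
    obtain ⟨ν, hS, hres⟩ := hr
    have hSν : ∀ k, restrict atoms k ν ∈ D.tuples k := (sat'_dissDB atoms Δ D ν).mp hS
    have hmem : restrict (dissAtoms atoms Δ') j ν ∈ (dissDB atoms Δ' D).tuples j :=
      (mem_dissDB_tuples atoms Δ' D j _).mpr (hSν j)
    refine ⟨⟨⟨j, restrict (dissAtoms atoms Δ') j ν, hmem⟩,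
      ⟨ν, (sat'_dissDB atoms Δ' D ν).mpr hSν, rfl⟩⟩, ?_⟩
    have hres' : restrictTup (hsub j) (restrict (dissAtoms atoms Δ') j ν) = v := hres
    refine Subtype.ext ?_
    exact congrArg
      (fun z : {t // t ∈ (dissDB atoms Δ D).tuples j} =>
        (⟨j, z⟩ : Σ j' : A, {t // t ∈ (dissDB atoms Δ D).tuples j'}))
      (Subtype.ext hres')
end Shrink

/-- Dissociation and functional dependencies.  Let `D` satisfy a set
`Γ` of functional dependencies, each holding on the attributes of a single relation of
`D`.  Dissociating relation `R_i` on any variable `y ∈ x̄_i⁺ ∖ x̄_i` (where `x̄_i⁺` is the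
closure of the variables of `R_i` under `Γ`) does not change the probability: if `Δ'` is
obtained from a dissociation `Δ` by additionally adding such a `y` to `ȳ_i`, then
`P(q^{Δ'}) = P(q^Δ)`. -/
theorem fd_dissociation_invariant
    {A V dom : Type*} [Fintype A] [Fintype V] [Fintype dom]
    (atoms : A → Finset V) (D : DB atoms dom) (hD : D.Valid)
    (Γ : Set (Finset V × V)) (hΓ : ∀ fd ∈ Γ, ∃ j : A, FDHolds atoms D j fd)
    (Δ : A → Finset V) (hΔ : IsDiss atoms ∅ Δ)
    (i : A) (y : V) (hy : Determines Γ (atoms i) y)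
    (hyv : y ∈ varsOf atoms) (hyi : y ∉ atoms i) :
    dissProb atoms (Function.update Δ i (Δ i ∪ {y})) D = dissProb atoms Δ D := by
  classical
  by_cases hyΔ : y ∈ Δ i
  · have h2 : Δ i ∪ {y} = Δ i :=
      Finset.union_eq_left.mpr (Finset.singleton_subset_iff.mpr hyΔ)
    rw [h2, Function.update_eq_self]
  set Δ' := Function.update Δ i (Δ i ∪ {y}) with hΔ'def
  have hΔ'i : Δ' i = Δ i ∪ {y} := Function.update_self i _ Δ
  have hΔ'j : ∀ j, j ≠ i → Δ' j = Δ j := fun j hj => Function.update_of_ne hj _ Δ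
  have hsub : ∀ j, dissAtoms atoms Δ j ⊆ dissAtoms atoms Δ' j := by
    intro j
    show atoms j ∪ Δ j ⊆ atoms j ∪ Δ' j
    by_cases hj : j = i
    · subst hj
      rw [hΔ'i]
      exact Finset.union_subset_union_right Finset.subset_union_left
    · rw [hΔ'j j hj]
  have huniq : ∀ (j : A) (ν ν' : V → dom),
      (∀ k, restrict atoms k ν ∈ D.tuples k) → (∀ k, restrict atoms k ν' ∈ D.tuples k) →
      (∀ v ∈ dissAtoms atoms Δ j, ν v = ν' v) →
      ∀ v ∈ dissAtoms atoms Δ' j, ν v = ν' v := by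
    intro j ν ν' hν hν' hag v hv
    by_cases hj : j = i
    · have hv' : v ∈ (atoms j ∪ Δ j) ∪ {y} := by
        have h4 : dissAtoms atoms Δ' j = (atoms j ∪ Δ j) ∪ {y} := by
          show atoms j ∪ Δ' j = _
          rw [hj, hΔ'i, Finset.union_assoc]
        rw [← h4]
        exact hv
      rcases Finset.mem_union.mp hv' with h | h
      · exact hag v h
      · have hvy : v = y := Finset.mem_singleton.mp h
        rw [hvy]
        refine determines_val_eq atoms D Γ hΓ ν ν' hν hν' (atoms i) y hy
          (fun u hu => hag u ?_)
        rw [hj]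
        exact Finset.mem_union_left _ hu
    · have h4 : dissAtoms atoms Δ' j = dissAtoms atoms Δ j := by
        show atoms j ∪ Δ' j = atoms j ∪ Δ j
        rw [hΔ'j j hj]
      exact hag v (h4 ▸ hv)
  -- the bijection on relevant tuples
  have hbij := dissShrink_bijective atoms Δ Δ' D hsub huniq
  set e : {s : Σ j : A, {t // t ∈ (dissDB atoms Δ' D).tuples j} //
        Rel' (dissAtoms atoms Δ') (dissDB atoms Δ' D) s} ≃
      {s : Σ j : A, {t // t ∈ (dissDB atoms Δ D).tuples j} //
        Rel' (dissAtoms atoms Δ) (dissDB atoms Δ D) s} :=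
    Equiv.ofBijective _ hbij with hedef
  show queryProb (dissAtoms atoms Δ') (dissDB atoms Δ' D)
      = queryProb (dissAtoms atoms Δ) (dissDB atoms Δ D)
  rw [queryProb_rel, queryProb_rel]
  refine Fintype.sum_equiv (Equiv.arrowCongr e (Equiv.refl Bool)) _ _ fun g => ?_
  have harr : ∀ b, (Equiv.arrowCongr e (Equiv.refl Bool)) g b = g (e.symm b) := fun b => rfl
  congr 1
  · -- the products of tuple-probabilities agree
    rw [← Equiv.prod_comp e (fun b =>
      if (Equiv.arrowCongr e (Equiv.refl Bool)) g b = true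
      then (dissDB atoms Δ D).prob b.1.1 b.1.2.1
      else 1 - (dissDB atoms Δ D).prob b.1.1 b.1.2.1)]
    refine Finset.prod_congr rfl fun b _ => ?_
    rw [harr, Equiv.symm_apply_apply]
    rfl
  · -- the indicators agree
    have hiff : (∃ ν : V → dom, ∃ hS : Sat' (dissAtoms atoms Δ') (dissDB atoms Δ' D) ν,
        ∀ j : A, g ⟨⟨j, restrict (dissAtoms atoms Δ') j ν, hS j⟩, ⟨ν, hS, rfl⟩⟩ = true) ↔
        (∃ ν : V → dom, ∃ hS' : Sat' (dissAtoms atoms Δ) (dissDB atoms Δ D) ν,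
        ∀ j : A, (Equiv.arrowCongr e (Equiv.refl Bool)) g
          ⟨⟨j, restrict (dissAtoms atoms Δ) j ν, hS' j⟩, ⟨ν, hS', rfl⟩⟩ = true) := ?_
    · simp only [hiff]
      congr 1
    constructor
    · rintro ⟨ν, hS, hj⟩
      have hSν : ∀ k, restrict atoms k ν ∈ D.tuples k :=
        (sat'_dissDB atoms Δ' D ν).mp hS
      have hS' : Sat' (dissAtoms atoms Δ) (dissDB atoms Δ D) ν :=
        (sat'_dissDB atoms Δ D ν).mpr hSν
      refine ⟨ν, hS', fun j => ?_⟩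
      rw [harr]
      have hsymm : e.symm ⟨⟨j, restrict (dissAtoms atoms Δ) j ν, hS' j⟩, ⟨ν, hS', rfl⟩⟩
          = ⟨⟨j, restrict (dissAtoms atoms Δ') j ν, hS j⟩, ⟨ν, hS, rfl⟩⟩ := by
        rw [Equiv.symm_apply_eq]
        exact Subtype.ext rfl
      rw [hsymm]
      exact hj j
    · rintro ⟨ν, hS', hj⟩
      have hSν : ∀ k, restrict atoms k ν ∈ D.tuples k :=
        (sat'_dissDB atoms Δ D ν).mp hS'
      have hS : Sat' (dissAtoms atoms Δ') (dissDB atoms Δ' D) ν :=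
        (sat'_dissDB atoms Δ' D ν).mpr hSν
      refine ⟨ν, hS, fun j => ?_⟩
      have hsymm : e.symm ⟨⟨j, restrict (dissAtoms atoms Δ) j ν, hS' j⟩, ⟨ν, hS', rfl⟩⟩
          = ⟨⟨j, restrict (dissAtoms atoms Δ') j ν, hS j⟩, ⟨ν, hS, rfl⟩⟩ := by
        rw [Equiv.symm_apply_eq]
        exact Subtype.ext rfl
      have := hj j
      rw [harr, hsymm] at this
      exact this

end

end PDB
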